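/- Let a, b > 0, let W : [0, a] × [0, b] → ℝ be continuous, and let ξ : [0, a] → ℝ and ζ : [0, b] → ℝ be continuously differentiable functions with ξ(0) = ζ(0). Then there exists a unique continuous function φ : [0, a] × [0, b] → ℝ, admitting continuous partial derivatives ∂_u φ, ∂_v φ and a continuous mixed second derivative ∂_u∂_v φ, such that ∂_u∂_v φ(u, v) = W(u, v)·φ(u, v) on [0, a] × [0, b], φ(u, 0) = ξ(u) for all u ∈ [0, a], and φ(0, v) = ζ(v) for all v ∈ [0, b]. (Well-posedness of the characteristic Cauchy (Goursat) problem for the wave equation with potential in null coordinates; this is the 1+1-dimensional reduction of the Goursat problem for the rescaled Regge–Wheeler/Zerilli equation with data on the two null hypersurfaces, the horizon and null infinity.) -/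

import Mathlib

open MeasureTheory intervalIntegral Set Function

namespace GoursatAux

/-- Clamp a real number to `[0, c]`. -/
def clampTo (c x : ℝ) : ℝ := max 0 (min x c)

lemma clampTo_mem {c : ℝ} (hc : 0 ≤ c) (x : ℝ) : clampTo c x ∈ Icc (0:ℝ) c :=
  ⟨le_max_left _ _, max_le hc (min_le_right _ _)⟩

lemma clampTo_eq {c x : ℝ} (hx : x ∈ Icc (0:ℝ) c) : clampTo c x = x := by
  simp [clampTo, min_eq_left hx.2, max_eq_right hx.1]

lemma continuous_clampTo (c : ℝ) : Continuous (clampTo c) :=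
  continuous_const.max (continuous_id.min continuous_const)

/-- Continuous extension of a function on `[0,a] × [0,b]` to the whole plane. -/
def ext2 (a b : ℝ) (f : ℝ → ℝ → ℝ) : ℝ → ℝ → ℝ := fun u v => f (clampTo a u) (clampTo b v)

lemma ext2_eq {a b u v : ℝ} (f : ℝ → ℝ → ℝ) (hu : u ∈ Icc (0:ℝ) a) (hv : v ∈ Icc (0:ℝ) b) :
    ext2 a b f u v = f u v := by
  simp [ext2, clampTo_eq hu, clampTo_eq hv]

lemma ext2_cont {a b : ℝ} (ha : 0 ≤ a) (hb : 0 ≤ b) {f : ℝ → ℝ → ℝ}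
    (hf : ContinuousOn (fun p : ℝ × ℝ => f p.1 p.2) (Icc 0 a ×ˢ Icc 0 b)) :
    Continuous (fun p : ℝ × ℝ => ext2 a b f p.1 p.2) := by
  have : Continuous (fun p : ℝ × ℝ => (clampTo a p.1, clampTo b p.2)) :=
    ((continuous_clampTo a).comp continuous_fst).prodMk ((continuous_clampTo b).comp continuous_snd)
  exact hf.comp_continuous this fun p => ⟨clampTo_mem ha _, clampTo_mem hb _⟩

/-- FTC: derivative of a primitive of a continuous function. -/
lemma ftc {f : ℝ → ℝ} (hf : Continuous f) (c u : ℝ) :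
    HasDerivAt (fun x => ∫ s in c..x, f s) (f u) u :=
  integral_hasDerivAt_right (hf.intervalIntegrable _ _)
    (hf.stronglyMeasurable.stronglyMeasurableAtFilter) hf.continuousAt

/-- Fubini for iterated interval integrals of a continuous function. -/
lemma intSwap {F : ℝ → ℝ → ℝ} (hF : Continuous (fun p : ℝ × ℝ => F p.1 p.2)) {u v : ℝ}
    (hu : 0 ≤ u) (hv : 0 ≤ v) :
    ∫ s in (0:ℝ)..u, ∫ t in (0:ℝ)..v, F s t = ∫ t in (0:ℝ)..v, ∫ s in (0:ℝ)..u, F s t := by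
  rw [intervalIntegral.integral_of_le hu, intervalIntegral.integral_of_le hv]
  simp_rw [intervalIntegral.integral_of_le hv, intervalIntegral.integral_of_le hu]
  apply MeasureTheory.integral_integral_swap
  rw [Measure.prod_restrict, ← Measure.volume_eq_prod]
  exact ((hF.continuousOn.integrableOn_compact (isCompact_Icc.prod isCompact_Icc)).mono_set
    (Set.prod_mono Set.Ioc_subset_Icc_self Set.Ioc_subset_Icc_self))

/-- Joint continuity of a parametric primitive, upper limit in the second coordinate. -/
lemma contParam1 {F : ℝ → ℝ → ℝ} (hF : Continuous (fun p : ℝ × ℝ => F p.1 p.2)) :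
    Continuous fun p : ℝ × ℝ => ∫ t in (0:ℝ)..p.2, F p.1 t :=
  intervalIntegral.continuous_parametric_primitive_of_continuous (μ := volume) (a₀ := 0) hF

/-- Joint continuity of a parametric primitive, upper limit in the first coordinate. -/
lemma contParam2 {F : ℝ → ℝ → ℝ} (hF : Continuous (fun p : ℝ × ℝ => F p.1 p.2)) :
    Continuous fun p : ℝ × ℝ => ∫ s in (0:ℝ)..p.1, F s p.2 := by
  have hsw : Continuous (fun p : ℝ × ℝ => (fun (x y : ℝ) => F y x) p.1 p.2) :=
    (hF.comp continuous_swap).congr fun q => rfl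
  exact ((contParam1 (F := fun x y => F y x) hsw).comp continuous_swap).congr fun q => rfl

/-- Joint continuity of the double primitive. -/
lemma contDouble {F : ℝ → ℝ → ℝ} (hF : Continuous (fun p : ℝ × ℝ => F p.1 p.2)) :
    Continuous (fun p : ℝ × ℝ => ∫ s in (0:ℝ)..p.1, ∫ t in (0:ℝ)..p.2, F s t) := by
  have h1 : Continuous (fun q : ℝ × ℝ => ∫ t in (0:ℝ)..q.2, F q.1 t) := contParam1 hF
  have hg : Continuous (uncurry (fun (x : ℝ) (s : ℝ) => ∫ t in (0:ℝ)..x, F s t)) := by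
    exact (h1.comp continuous_swap).congr fun q => rfl
  have h2 := intervalIntegral.continuous_parametric_primitive_of_continuous (μ := volume)
    (a₀ := 0) hg
  exact (h2.comp continuous_swap).congr fun q => rfl

/-- The elementary exponential integral. -/
lemma expInt (lam u : ℝ) (hlam : 0 < lam) :
    ∫ s in (0:ℝ)..u, Real.exp (lam * s) = Real.exp (lam * u) / lam - 1 / lam := by
  have hne : lam ≠ 0 := ne_of_gt hlam
  have : ∀ s ∈ Set.uIcc (0:ℝ) u,
      HasDerivAt (fun x => Real.exp (lam * x) / lam) (Real.exp (lam * s)) s := by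
    intro s _
    have h1 : HasDerivAt (fun x : ℝ => lam * x) lam s := by
      simpa using (hasDerivAt_id s).const_mul lam
    have h2 := (h1.exp).div_const lam
    simpa [mul_comm, mul_div_assoc, mul_div_cancel_left₀ _ hne] using h2
  rw [intervalIntegral.integral_eq_sub_of_hasDerivAt this
    ((Real.continuous_exp.comp (continuous_const.mul continuous_id)).intervalIntegrable _ _)]
  simp [Real.exp_zero]

end GoursatAux

namespace GoursatAux

/-- The compact rectangle. -/
def Kset (a b : ℝ) : Set (ℝ × ℝ) := Icc 0 a ×ˢ Icc 0 b

instance (a b : ℝ) : CompactSpace (Kset a b) :=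
  isCompact_iff_compactSpace.mp (isCompact_Icc.prod isCompact_Icc)

lemma memK {a b : ℝ} (ha : 0 ≤ a) (hb : 0 ≤ b) (u v : ℝ) :
    (clampTo a u, clampTo b v) ∈ Kset a b :=
  ⟨clampTo_mem ha _, clampTo_mem hb _⟩

/-- Extension of a continuous map on the rectangle to the plane, via clamping. -/
def Efun {a b : ℝ} (ha : 0 ≤ a) (hb : 0 ≤ b) (g : C(Kset a b, ℝ)) (u v : ℝ) : ℝ :=
  g ⟨(clampTo a u, clampTo b v), memK ha hb u v⟩

lemma Efun_cont {a b : ℝ} (ha : 0 ≤ a) (hb : 0 ≤ b) (g : C(Kset a b, ℝ)) :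
    Continuous (fun p : ℝ × ℝ => Efun ha hb g p.1 p.2) :=
  g.continuous.comp (Continuous.subtype_mk
    (((continuous_clampTo a).comp continuous_fst).prodMk
      ((continuous_clampTo b).comp continuous_snd)) _)

lemma Efun_dist {a b : ℝ} (ha : 0 ≤ a) (hb : 0 ≤ b) (g g' : C(Kset a b, ℝ)) (u v : ℝ) :
    |Efun ha hb g u v - Efun ha hb g' u v| ≤ dist g g' := by
  simpa [Real.dist_eq, Efun] using
    ContinuousMap.dist_apply_le_dist (f := g) (g := g') ⟨(clampTo a u, clampTo b v), memK ha hb u v⟩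

lemma volterra (a b M : ℝ) (ha : 0 ≤ a) (hb : 0 ≤ b) (hM : 0 ≤ M)
    (Wt D : ℝ → ℝ → ℝ) (hWt : Continuous fun p : ℝ × ℝ => Wt p.1 p.2)
    (hD : Continuous fun p : ℝ × ℝ => D p.1 p.2)
    (hbd : ∀ u v, |Wt u v| ≤ M) :
    (∃ φ : ℝ → ℝ → ℝ, Continuous (fun p : ℝ × ℝ => φ p.1 p.2) ∧
      ∀ u ∈ Icc (0:ℝ) a, ∀ v ∈ Icc (0:ℝ) b,
        φ u v = D u v + ∫ s in (0:ℝ)..u, ∫ t in (0:ℝ)..v, Wt s t * φ s t) ∧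
    (∀ φ ψ : ℝ → ℝ → ℝ, Continuous (fun p : ℝ × ℝ => φ p.1 p.2) →
      Continuous (fun p : ℝ × ℝ => ψ p.1 p.2) →
      (∀ u ∈ Icc (0:ℝ) a, ∀ v ∈ Icc (0:ℝ) b,
        φ u v = D u v + ∫ s in (0:ℝ)..u, ∫ t in (0:ℝ)..v, Wt s t * φ s t) →
      (∀ u ∈ Icc (0:ℝ) a, ∀ v ∈ Icc (0:ℝ) b,
        ψ u v = D u v + ∫ s in (0:ℝ)..u, ∫ t in (0:ℝ)..v, Wt s t * ψ s t) →
      ∀ u ∈ Icc (0:ℝ) a, ∀ v ∈ Icc (0:ℝ) b, φ u v = ψ u v) := by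
  haveI : Nonempty (Kset a b) :=
    ⟨⟨(0, 0), ⟨Set.left_mem_Icc.mpr ha, Set.left_mem_Icc.mpr hb⟩⟩⟩
  set lam : ℝ := M * b + 1 with hlamdef
  have hlam : 0 < lam := by positivity
  have hexpc : Continuous (fun q : ℝ × ℝ => Real.exp (-(lam * q.1))) :=
    Real.continuous_exp.comp ((continuous_const.mul continuous_fst).neg)
  -- the integrand defining the operator, for a continuous map `g` on the rectangle
  have hQc : ∀ g : C(Kset a b, ℝ), Continuous (fun q : ℝ × ℝ =>
      Wt q.1 q.2 * (Real.exp (lam * q.1) * Efun ha hb g q.1 q.2)) := fun g =>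
    hWt.mul ((Real.continuous_exp.comp (continuous_const.mul continuous_fst)).mul
      (Efun_cont ha hb g))
  -- the contraction operator
  set S : C(Kset a b, ℝ) → C(Kset a b, ℝ) := fun g =>
    ⟨fun p => Real.exp (-(lam * p.1.1)) * (D p.1.1 p.1.2 +
        ∫ s in (0:ℝ)..p.1.1, ∫ t in (0:ℝ)..p.1.2,
          Wt s t * (Real.exp (lam * s) * Efun ha hb g s t)),
      ((hexpc.mul (hD.add (contDouble (hQc g)))).comp continuous_subtype_val)⟩ with hSdef
  have hSapp : ∀ (g : C(Kset a b, ℝ)) (p : Kset a b), S g p =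
      Real.exp (-(lam * p.1.1)) * (D p.1.1 p.1.2 +
        ∫ s in (0:ℝ)..p.1.1, ∫ t in (0:ℝ)..p.1.2,
          Wt s t * (Real.exp (lam * s) * Efun ha hb g s t)) := by
    intro g p; rw [hSdef]; rfl
  -- the contraction estimate
  have hdistS : ∀ g g' : C(Kset a b, ℝ), dist (S g) (S g') ≤ (M * b / lam) * dist g g' := by
    intro g g'
    have hΔ : 0 ≤ dist g g' := dist_nonneg
    have hr0 : 0 ≤ M * b / lam * dist g g' := by positivity
    rw [ContinuousMap.dist_le hr0]
    rintro ⟨⟨u, v⟩, hu, hv⟩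
    rw [hSapp, hSapp, Real.dist_eq]
    set Qg := fun s t => Wt s t * (Real.exp (lam * s) * Efun ha hb g s t) with hQgdef
    set Qg' := fun s t => Wt s t * (Real.exp (lam * s) * Efun ha hb g' s t) with hQg'def
    have hIg : ∀ s : ℝ, Continuous fun t => Qg s t := by
      intro s; rw [hQgdef]
      exact ((hQc g).comp (Continuous.prodMk_right s)).congr fun t => rfl
    have hIg' : ∀ s : ℝ, Continuous fun t => Qg' s t := by
      intro s; rw [hQg'def]
      exact ((hQc g').comp (Continuous.prodMk_right s)).congr fun t => rfl
    have hOg : Continuous fun s => ∫ t in (0:ℝ)..v, Qg s t := by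
      rw [hQgdef]
      exact ((contParam1 (F := fun s t => Wt s t * (Real.exp (lam * s) * Efun ha hb g s t))
        (hQc g)).comp (continuous_id.prodMk continuous_const)).congr fun s => rfl
    have hOg' : Continuous fun s => ∫ t in (0:ℝ)..v, Qg' s t := by
      rw [hQg'def]
      exact ((contParam1 (F := fun s t => Wt s t * (Real.exp (lam * s) * Efun ha hb g' s t))
        (hQc g')).comp (continuous_id.prodMk continuous_const)).congr fun s => rfl
    have step1 : Real.exp (-(lam * u)) * (D u v + ∫ s in (0:ℝ)..u, ∫ t in (0:ℝ)..v, Qg s t) -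
        Real.exp (-(lam * u)) * (D u v + ∫ s in (0:ℝ)..u, ∫ t in (0:ℝ)..v, Qg' s t) =
        Real.exp (-(lam * u)) * (∫ s in (0:ℝ)..u,
          ((∫ t in (0:ℝ)..v, Qg s t) - (∫ t in (0:ℝ)..v, Qg' s t))) := by
      rw [intervalIntegral.integral_sub (hOg.intervalIntegrable _ _) (hOg'.intervalIntegrable _ _)]
      ring
    rw [step1, abs_mul, abs_of_pos (Real.exp_pos _)]
    -- bound the inner difference
    have hptwise : ∀ s : ℝ,
        ‖(∫ t in (0:ℝ)..v, Qg s t) - (∫ t in (0:ℝ)..v, Qg' s t)‖ ≤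
          M * dist g g' * b * Real.exp (lam * s) := by
      intro s
      rw [← intervalIntegral.integral_sub ((hIg s).intervalIntegrable _ _)
        ((hIg' s).intervalIntegrable _ _)]
      have hbound : ∀ t ∈ Set.uIoc (0:ℝ) v, ‖Qg s t - Qg' s t‖ ≤
          M * Real.exp (lam * s) * dist g g' := by
        intro t _
        have heq : Qg s t - Qg' s t =
            Wt s t * (Real.exp (lam * s) * (Efun ha hb g s t - Efun ha hb g' s t)) := by
          simp only [hQgdef, hQg'def]; ring
        rw [Real.norm_eq_abs, heq, abs_mul, abs_mul, abs_of_pos (Real.exp_pos _)]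
        have h1 := hbd s t
        have h2 := Efun_dist ha hb g g' s t
        have h3 := abs_nonneg (Wt s t)
        have h5 : Real.exp (lam * s) * |Efun ha hb g s t - Efun ha hb g' s t| ≤
            Real.exp (lam * s) * dist g g' :=
          mul_le_mul_of_nonneg_left h2 (Real.exp_pos _).le
        calc |Wt s t| * (Real.exp (lam * s) * |Efun ha hb g s t - Efun ha hb g' s t|)
            ≤ M * (Real.exp (lam * s) * dist g g') :=
              mul_le_mul h1 h5 (by positivity) hM
          _ = M * Real.exp (lam * s) * dist g g' := by ring
      calc ‖∫ t in (0:ℝ)..v, (Qg s t - Qg' s t)‖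
          ≤ M * Real.exp (lam * s) * dist g g' * |v - 0| :=
            intervalIntegral.norm_integral_le_of_norm_le_const hbound
        _ ≤ M * dist g g' * b * Real.exp (lam * s) := by
            rw [sub_zero, abs_of_nonneg hv.1]
            have h6 : 0 ≤ M * Real.exp (lam * s) * dist g g' := by positivity
            nlinarith [mul_nonneg h6 (sub_nonneg.mpr hv.2)]
    have hbndint : ∫ s in (0:ℝ)..u, M * dist g g' * b * Real.exp (lam * s) =
        M * dist g g' * b * (Real.exp (lam * u) / lam - 1 / lam) := by
      rw [intervalIntegral.integral_const_mul, expInt lam u hlam]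
    have hmain : ‖∫ s in (0:ℝ)..u,
        ((∫ t in (0:ℝ)..v, Qg s t) - (∫ t in (0:ℝ)..v, Qg' s t))‖ ≤
        M * dist g g' * b * (Real.exp (lam * u) / lam - 1 / lam) := by
      refine le_trans (intervalIntegral.norm_integral_le_abs_of_norm_le
        (Filter.Eventually.of_forall hptwise) ?_) ?_
      · exact ((continuous_const.mul
          (Real.continuous_exp.comp (continuous_const.mul continuous_id))).intervalIntegrable _ _)
      · rw [hbndint, abs_of_nonneg]
        have h5 : (1:ℝ) ≤ Real.exp (lam * u) := by
          rw [← Real.exp_zero]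
          exact Real.exp_le_exp.mpr (by nlinarith [hu.1])
        have : 0 ≤ Real.exp (lam * u) / lam - 1 / lam := by
          rw [sub_nonneg, div_le_div_iff_of_pos_right hlam]
          exact h5
        positivity
    rw [← Real.norm_eq_abs]
    calc Real.exp (-(lam * u)) * ‖∫ s in (0:ℝ)..u,
          ((∫ t in (0:ℝ)..v, Qg s t) - (∫ t in (0:ℝ)..v, Qg' s t))‖
        ≤ Real.exp (-(lam * u)) * (M * dist g g' * b * (Real.exp (lam * u) / lam - 1 / lam)) :=
          mul_le_mul_of_nonneg_left hmain (Real.exp_pos _).le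
      _ ≤ M * b / lam * dist g g' := by
          have hEpos : (0:ℝ) < Real.exp (lam * u) := Real.exp_pos _
          have hEne : Real.exp (lam * u) ≠ 0 := hEpos.ne'
          rw [Real.exp_neg]
          have hinv : (Real.exp (lam * u))⁻¹ * Real.exp (lam * u) = 1 := inv_mul_cancel₀ hEne
          have h1 : (Real.exp (lam * u))⁻¹ *
              (M * dist g g' * b * (Real.exp (lam * u) / lam - 1 / lam)) =
              M * dist g g' * b / lam * (1 - (Real.exp (lam * u))⁻¹) := by
            linear_combination (M * dist g g' * b / lam) * hinv
          rw [h1]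
          have h2 : 1 - (Real.exp (lam * u))⁻¹ ≤ 1 := by
            have := inv_pos.mpr hEpos
            linarith
          calc M * dist g g' * b / lam * (1 - (Real.exp (lam * u))⁻¹)
              ≤ M * dist g g' * b / lam * 1 :=
                mul_le_mul_of_nonneg_left h2 (by positivity)
            _ = M * b / lam * dist g g' := by ring
  have hrr : M * b / lam < 1 := by
    rw [div_lt_one hlam, hlamdef]; linarith
  have hnn : (0:ℝ) ≤ M * b / lam := by positivity
  have hcontr : ContractingWith ⟨M * b / lam, hnn⟩ S := by
    constructor
    · exact NNReal.coe_lt_coe.mp hrr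
    · exact LipschitzWith.of_dist_le_mul fun g g' => hdistS g g'
  -- a helper: any continuous solution of the integral equation yields a fixed point of `S`
  have key : ∀ χ : ℝ → ℝ → ℝ,
      (∀ u ∈ Icc (0:ℝ) a, ∀ v ∈ Icc (0:ℝ) b,
        χ u v = D u v + ∫ s in (0:ℝ)..u, ∫ t in (0:ℝ)..v, Wt s t * χ s t) →
      ∀ g : C(Kset a b, ℝ),
      (∀ p : Kset a b, g p = Real.exp (-(lam * (p : ℝ × ℝ).1)) * χ (p : ℝ × ℝ).1 (p : ℝ × ℝ).2) →
      S g = g := by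
    intro χ hχe g hg
    ext p
    obtain ⟨⟨u', v'⟩, hu', hv'⟩ := p
    rw [hSapp]
    have hgp := hg ⟨(u', v'), ⟨hu', hv'⟩⟩
    have hIeq : (∫ s in (0:ℝ)..u', ∫ t in (0:ℝ)..v',
        Wt s t * (Real.exp (lam * s) * Efun ha hb g s t)) =
        ∫ s in (0:ℝ)..u', ∫ t in (0:ℝ)..v', Wt s t * χ s t := by
      apply intervalIntegral.integral_congr
      intro s hs
      rw [Set.uIcc_of_le hu'.1] at hs
      have hsa : s ∈ Icc (0:ℝ) a := ⟨hs.1, hs.2.trans hu'.2⟩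
      apply intervalIntegral.integral_congr
      intro t ht
      rw [Set.uIcc_of_le hv'.1] at ht
      have htb : t ∈ Icc (0:ℝ) b := ⟨ht.1, ht.2.trans hv'.2⟩
      have hcl2 : (⟨(clampTo a s, clampTo b t), memK ha hb s t⟩ : Kset a b) =
          ⟨(s, t), ⟨hsa, htb⟩⟩ :=
        Subtype.ext (Prod.ext (clampTo_eq hsa) (clampTo_eq htb))
      have h1 : Efun ha hb g s t = Real.exp (-(lam * s)) * χ s t :=
        calc Efun ha hb g s t = g ⟨(s, t), ⟨hsa, htb⟩⟩ := congrArg g hcl2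
          _ = _ := hg ⟨(s, t), ⟨hsa, htb⟩⟩
      show Wt s t * (Real.exp (lam * s) * Efun ha hb g s t) = Wt s t * χ s t
      rw [h1, ← mul_assoc (Real.exp (lam * s)), ← Real.exp_add]
      simp
    calc Real.exp (-(lam * u')) * (D u' v' + ∫ s in (0:ℝ)..u', ∫ t in (0:ℝ)..v',
          Wt s t * (Real.exp (lam * s) * Efun ha hb g s t))
        = Real.exp (-(lam * u')) * (D u' v' +
            ∫ s in (0:ℝ)..u', ∫ t in (0:ℝ)..v', Wt s t * χ s t) := by rw [hIeq]
      _ = Real.exp (-(lam * u')) * χ u' v' := by rw [← hχe u' hu' v' hv']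
      _ = g ⟨(u', v'), ⟨hu', hv'⟩⟩ := hgp.symm
  constructor
  · -- existence via the fixed point
    obtain ⟨g₀, hg₀⟩ : ∃ g₀ : C(Kset a b, ℝ), S g₀ = g₀ :=
      ⟨_, hcontr.fixedPoint_isFixedPt⟩
    refine ⟨fun u' v' => Real.exp (lam * u') * Efun ha hb g₀ u' v',
      (Real.continuous_exp.comp (continuous_const.mul continuous_fst)).mul
        (Efun_cont ha hb g₀), ?_⟩
    intro u hu v hv
    have hpmem : ((u, v) : ℝ × ℝ) ∈ Kset a b := ⟨hu, hv⟩
    have hkey : Real.exp (-(lam * u)) * (D u v + ∫ s in (0:ℝ)..u, ∫ t in (0:ℝ)..v,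
        Wt s t * (Real.exp (lam * s) * Efun ha hb g₀ s t)) = g₀ ⟨(u, v), hpmem⟩ := by
      have h := congrFun (congrArg DFunLike.coe hg₀) ⟨(u, v), hpmem⟩
      rw [hSapp] at h
      exact h
    have hcl : (⟨(clampTo a u, clampTo b v), memK ha hb u v⟩ : Kset a b) =
        ⟨(u, v), hpmem⟩ := Subtype.ext (Prod.ext (clampTo_eq hu) (clampTo_eq hv))
    have hEf : Efun ha hb g₀ u v = g₀ ⟨(u, v), hpmem⟩ := congrArg g₀ hcl
    show Real.exp (lam * u) * Efun ha hb g₀ u v = D u v + ∫ s in (0:ℝ)..u,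
      ∫ t in (0:ℝ)..v, Wt s t * (Real.exp (lam * s) * Efun ha hb g₀ s t)
    rw [hEf, ← hkey, ← mul_assoc, ← Real.exp_add]
    simp
  · -- uniqueness via the contraction property
    intro φ ψ hφc hψc hφe hψe u hu v hv
    have hgc : ∀ χ : ℝ → ℝ → ℝ, Continuous (fun p : ℝ × ℝ => χ p.1 p.2) →
        Continuous fun p : Kset a b =>
          Real.exp (-(lam * (p : ℝ × ℝ).1)) * χ (p : ℝ × ℝ).1 (p : ℝ × ℝ).2 :=
      fun χ hχ => (hexpc.mul hχ).comp continuous_subtype_val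
    set gφ : C(Kset a b, ℝ) :=
      ⟨fun p => Real.exp (-(lam * (p : ℝ × ℝ).1)) * φ (p : ℝ × ℝ).1 (p : ℝ × ℝ).2,
        hgc φ hφc⟩ with hgφdef
    set gψ : C(Kset a b, ℝ) :=
      ⟨fun p => Real.exp (-(lam * (p : ℝ × ℝ).1)) * ψ (p : ℝ × ℝ).1 (p : ℝ × ℝ).2,
        hgc ψ hψc⟩ with hgψdef
    have happφ : ∀ p : Kset a b,
        gφ p = Real.exp (-(lam * (p : ℝ × ℝ).1)) * φ (p : ℝ × ℝ).1 (p : ℝ × ℝ).2 := by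
      intro p; rw [hgφdef]; rfl
    have happψ : ∀ p : Kset a b,
        gψ p = Real.exp (-(lam * (p : ℝ × ℝ).1)) * ψ (p : ℝ × ℝ).1 (p : ℝ × ℝ).2 := by
      intro p; rw [hgψdef]; rfl
    have hfixφ := key φ hφe gφ happφ
    have hfixψ := key ψ hψe gψ happψ
    have hd := hdistS gφ gψ
    rw [hfixφ, hfixψ] at hd
    have h0 : dist gφ gψ ≤ 0 := by
      by_contra hcon
      push_neg at hcon
      nlinarith [mul_lt_mul_of_pos_right hrr hcon]
    have heqg : gφ = gψ := eq_of_dist_eq_zero (le_antisymm h0 dist_nonneg)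
    have hpt := congrFun (congrArg DFunLike.coe heqg) ⟨(u, v), ⟨hu, hv⟩⟩
    rw [happφ, happψ] at hpt
    exact mul_left_cancel₀ (Real.exp_ne_zero _) hpt

end GoursatAux

/-- A solution of the characteristic (Goursat) problem `∂_u∂_v φ = W·φ` on the
rectangle `[0,a] × [0,b]`, with data `ξ` on the null segment `{v = 0}` and `ζ` on the
null segment `{u = 0}`: `φ` is continuous on the rectangle, admits continuous partial
derivatives `φu = ∂_u φ`, `φv = ∂_v φ` and a continuous mixed second derivative
`φuv = ∂_u ∂_v φ` there, the equation holds on the rectangle, and `φ` restricts to the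
data on the two sides. -/
def IsGoursatSolution (a b : ℝ) (W : ℝ → ℝ → ℝ) (ξ ζ : ℝ → ℝ)
    (φ : ℝ → ℝ → ℝ) : Prop :=
  ContinuousOn (fun p : ℝ × ℝ => φ p.1 p.2) (Set.Icc 0 a ×ˢ Set.Icc 0 b) ∧
  ∃ φu φv φuv : ℝ → ℝ → ℝ,
    ContinuousOn (fun p : ℝ × ℝ => φu p.1 p.2) (Set.Icc 0 a ×ˢ Set.Icc 0 b) ∧
    ContinuousOn (fun p : ℝ × ℝ => φv p.1 p.2) (Set.Icc 0 a ×ˢ Set.Icc 0 b) ∧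
    ContinuousOn (fun p : ℝ × ℝ => φuv p.1 p.2) (Set.Icc 0 a ×ˢ Set.Icc 0 b) ∧
    (∀ v ∈ Set.Icc (0:ℝ) b, ∀ u ∈ Set.Icc (0:ℝ) a,
      HasDerivWithinAt (fun u' => φ u' v) (φu u v) (Set.Icc 0 a) u) ∧
    (∀ u ∈ Set.Icc (0:ℝ) a, ∀ v ∈ Set.Icc (0:ℝ) b,
      HasDerivWithinAt (fun v' => φ u v') (φv u v) (Set.Icc 0 b) v) ∧
    (∀ v ∈ Set.Icc (0:ℝ) b, ∀ u ∈ Set.Icc (0:ℝ) a,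
      HasDerivWithinAt (fun u' => φv u' v) (φuv u v) (Set.Icc 0 a) u) ∧
    (∀ u ∈ Set.Icc (0:ℝ) a, ∀ v ∈ Set.Icc (0:ℝ) b, φuv u v = W u v * φ u v) ∧
    (∀ u ∈ Set.Icc (0:ℝ) a, φ u 0 = ξ u) ∧
    (∀ v ∈ Set.Icc (0:ℝ) b, φ 0 v = ζ v)

open GoursatAux

/-- From a Goursat solution, derive the Volterra integral equation for the clamped extension. -/
lemma goursat_to_volterra (a b : ℝ) (ha : 0 < a) (hb : 0 < b)
    (W : ℝ → ℝ → ℝ)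
    (hW : ContinuousOn (fun p : ℝ × ℝ => W p.1 p.2) (Set.Icc 0 a ×ˢ Set.Icc 0 b))
    (ξ ζ : ℝ → ℝ) (χ : ℝ → ℝ → ℝ)
    (hsol : IsGoursatSolution a b W ξ ζ χ) :
    ∀ u ∈ Set.Icc (0:ℝ) a, ∀ v ∈ Set.Icc (0:ℝ) b,
      ext2 a b χ u v = (ξ (clampTo a u) + ζ (clampTo b v) - ζ 0) +
        ∫ s in (0:ℝ)..u, ∫ t in (0:ℝ)..v, ext2 a b W s t * ext2 a b χ s t := by
  have ha' : (0:ℝ) ≤ a := ha.le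
  have hb' : (0:ℝ) ≤ b := hb.le
  obtain ⟨hχc, χu, χv, χuv, hcu, hcv, hcuv, hdu, hdv, hduv, heqn, hbd1, hbd2⟩ := hsol
  have hχbc : Continuous fun p : ℝ × ℝ => ext2 a b χ p.1 p.2 := ext2_cont ha' hb' hχc
  intro u hu v hv
  -- Step A : FTC for `s ↦ χv s t` on `[0, u]`
  have stepA : ∀ t ∈ Icc (0:ℝ) b,
      χv u t - χv 0 t = ∫ s in (0:ℝ)..u, ext2 a b W s t * ext2 a b χ s t := by
    intro t ht
    have hmaps : Set.MapsTo (fun s : ℝ => (s, t)) (Icc 0 u) (Icc 0 a ×ˢ Icc 0 b) :=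
      fun s hs => ⟨⟨hs.1, hs.2.trans hu.2⟩, ht⟩
    have hcont : ContinuousOn (fun s => χv s t) (Icc 0 u) :=
      hcv.comp (Continuous.continuousOn (continuous_id.prodMk continuous_const)) hmaps
    have hderiv : ∀ x ∈ Ioo (0:ℝ) u, HasDerivWithinAt (fun s => χv s t) (χuv x t) (Ioi x) x := by
      intro x hx
      have hxa : x ∈ Icc (0:ℝ) a := ⟨hx.1.le, hx.2.le.trans hu.2⟩
      refine (hduv t ht x hxa).mono_of_mem_nhdsWithin ?_
      refine Filter.mem_of_superset
        (Ioc_mem_nhdsGT_of_mem ⟨le_refl x, lt_of_lt_of_le hx.2 hu.2⟩) ?_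
      exact fun y hy => ⟨hx.1.le.trans hy.1.le, hy.2⟩
    have hint : IntervalIntegrable (fun s => χuv s t) MeasureTheory.volume 0 u := by
      apply ContinuousOn.intervalIntegrable
      rw [Set.uIcc_of_le hu.1]
      exact hcuv.comp (Continuous.continuousOn (continuous_id.prodMk continuous_const)) hmaps
    have hftc := intervalIntegral.integral_eq_sub_of_hasDeriv_right_of_le hu.1 hcont hderiv hint
    rw [← hftc]
    apply intervalIntegral.integral_congr
    intro s hs
    rw [Set.uIcc_of_le hu.1] at hs
    have hsa : s ∈ Icc (0:ℝ) a := ⟨hs.1, hs.2.trans hu.2⟩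
    show χuv s t = ext2 a b W s t * ext2 a b χ s t
    rw [ext2_eq W hsa ht, ext2_eq χ hsa ht]
    exact heqn s hsa t ht
  -- Step B : FTC for `t ↦ χ 0 t` on `[0, v]`
  have stepB : ∫ t in (0:ℝ)..v, χv 0 t = ζ v - ζ 0 := by
    have h0a : (0:ℝ) ∈ Icc (0:ℝ) a := Set.left_mem_Icc.mpr ha'
    have hmaps : Set.MapsTo (fun t : ℝ => ((0:ℝ), t)) (Icc 0 v) (Icc 0 a ×ˢ Icc 0 b) :=
      fun t htm => ⟨h0a, ⟨htm.1, htm.2.trans hv.2⟩⟩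
    have hcont : ContinuousOn (fun t => χ 0 t) (Icc 0 v) :=
      hχc.comp (Continuous.continuousOn (continuous_const.prodMk continuous_id)) hmaps
    have hderiv : ∀ x ∈ Ioo (0:ℝ) v, HasDerivWithinAt (fun t => χ 0 t) (χv 0 x) (Ioi x) x := by
      intro x hx
      have hxb : x ∈ Icc (0:ℝ) b := ⟨hx.1.le, hx.2.le.trans hv.2⟩
      refine (hdv 0 h0a x hxb).mono_of_mem_nhdsWithin ?_
      refine Filter.mem_of_superset
        (Ioc_mem_nhdsGT_of_mem ⟨le_refl x, lt_of_lt_of_le hx.2 hv.2⟩) ?_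
      exact fun y hy => ⟨hx.1.le.trans hy.1.le, hy.2⟩
    have hint : IntervalIntegrable (fun t => χv 0 t) MeasureTheory.volume 0 v := by
      apply ContinuousOn.intervalIntegrable
      rw [Set.uIcc_of_le hv.1]
      exact hcv.comp (Continuous.continuousOn (continuous_const.prodMk continuous_id)) hmaps
    have hftc := intervalIntegral.integral_eq_sub_of_hasDeriv_right_of_le hv.1 hcont hderiv hint
    rw [hftc, hbd2 v hv, hbd2 0 (Set.left_mem_Icc.mpr hb')]
  -- Step C : FTC for `t ↦ χ u t` on `[0, v]`
  have stepC : ∫ t in (0:ℝ)..v, χv u t = χ u v - ξ u := by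
    have hmaps : Set.MapsTo (fun t : ℝ => (u, t)) (Icc 0 v) (Icc 0 a ×ˢ Icc 0 b) :=
      fun t htm => ⟨hu, ⟨htm.1, htm.2.trans hv.2⟩⟩
    have hcont : ContinuousOn (fun t => χ u t) (Icc 0 v) :=
      hχc.comp (Continuous.continuousOn (continuous_const.prodMk continuous_id)) hmaps
    have hderiv : ∀ x ∈ Ioo (0:ℝ) v, HasDerivWithinAt (fun t => χ u t) (χv u x) (Ioi x) x := by
      intro x hx
      have hxb : x ∈ Icc (0:ℝ) b := ⟨hx.1.le, hx.2.le.trans hv.2⟩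
      refine (hdv u hu x hxb).mono_of_mem_nhdsWithin ?_
      refine Filter.mem_of_superset
        (Ioc_mem_nhdsGT_of_mem ⟨le_refl x, lt_of_lt_of_le hx.2 hv.2⟩) ?_
      exact fun y hy => ⟨hx.1.le.trans hy.1.le, hy.2⟩
    have hint : IntervalIntegrable (fun t => χv u t) MeasureTheory.volume 0 v := by
      apply ContinuousOn.intervalIntegrable
      rw [Set.uIcc_of_le hv.1]
      exact hcv.comp (Continuous.continuousOn (continuous_const.prodMk continuous_id)) hmaps
    have hftc := intervalIntegral.integral_eq_sub_of_hasDeriv_right_of_le hv.1 hcont hderiv hint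
    rw [hftc, hbd1 u hu]
  -- integrability of the two summands for `integral_add`
  have hFbc : Continuous fun p : ℝ × ℝ => ext2 a b W p.1 p.2 * ext2 a b χ p.1 p.2 :=
    (ext2_cont ha' hb' hW).mul hχbc
  have hint1 : IntervalIntegrable (fun t => χv 0 t) MeasureTheory.volume 0 v := by
    apply ContinuousOn.intervalIntegrable
    rw [Set.uIcc_of_le hv.1]
    exact hcv.comp (Continuous.continuousOn (continuous_const.prodMk continuous_id))
      (fun t htm => ⟨Set.left_mem_Icc.mpr ha', ⟨htm.1, htm.2.trans hv.2⟩⟩)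
  have hint2 : IntervalIntegrable
      (fun t => ∫ s in (0:ℝ)..u, ext2 a b W s t * ext2 a b χ s t)
      MeasureTheory.volume 0 v := by
    have hcontG : Continuous fun t : ℝ => ∫ s in (0:ℝ)..u, ext2 a b W s t * ext2 a b χ s t :=
      ((contParam2 (F := fun s t => ext2 a b W s t * ext2 a b χ s t) hFbc).comp
        (continuous_const.prodMk continuous_id)).congr fun t => rfl
    exact hcontG.intervalIntegrable _ _
  have hadd : ∫ t in (0:ℝ)..v, χv u t = (∫ t in (0:ℝ)..v, χv 0 t) +
      ∫ t in (0:ℝ)..v, ∫ s in (0:ℝ)..u, ext2 a b W s t * ext2 a b χ s t := by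
    rw [← intervalIntegral.integral_add hint1 hint2]
    apply intervalIntegral.integral_congr
    intro t ht'
    rw [Set.uIcc_of_le hv.1] at ht'
    have htb : t ∈ Icc (0:ℝ) b := ⟨ht'.1, ht'.2.trans hv.2⟩
    have hA := stepA t htb
    show χv u t = χv 0 t + _
    linarith
  have hswap := intSwap (F := fun s t => ext2 a b W s t * ext2 a b χ s t) hFbc hu.1 hv.1
  rw [ext2_eq χ hu hv, clampTo_eq hu, clampTo_eq hv, hswap]
  linarith [stepC, hadd, stepB]

/-- well-posedness of the characteristic Cauchy (Goursat) problem
`∂_u∂_v φ = W·φ` on `[0,a] × [0,b]` with continuous `W`, `C¹` data `ξ`, `ζ` agreeing at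
the corner: a solution exists and any two solutions agree on the rectangle. -/
theorem goursat_problem_well_posed (a b : ℝ) (ha : 0 < a) (hb : 0 < b)
    (W : ℝ → ℝ → ℝ)
    (hW : ContinuousOn (fun p : ℝ × ℝ => W p.1 p.2) (Set.Icc 0 a ×ˢ Set.Icc 0 b))
    (ξ ζ : ℝ → ℝ)
    (hξ : ContDiffOn ℝ 1 ξ (Set.Icc 0 a)) (hζ : ContDiffOn ℝ 1 ζ (Set.Icc 0 b))
    (hcorner : ξ 0 = ζ 0) :
    (∃ φ : ℝ → ℝ → ℝ, IsGoursatSolution a b W ξ ζ φ) ∧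
    (∀ φ φ' : ℝ → ℝ → ℝ, IsGoursatSolution a b W ξ ζ φ →
      IsGoursatSolution a b W ξ ζ φ' →
      ∀ u ∈ Set.Icc (0:ℝ) a, ∀ v ∈ Set.Icc (0:ℝ) b, φ u v = φ' u v) := by
  have ha' : (0:ℝ) ≤ a := ha.le
  have hb' : (0:ℝ) ≤ b := hb.le
  -- extended potential and bound
  have hWtc : Continuous fun p : ℝ × ℝ => ext2 a b W p.1 p.2 := ext2_cont ha' hb' hW
  obtain ⟨M₀, hM₀⟩ := (isCompact_Icc.prod isCompact_Icc).exists_bound_of_continuousOn hW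
  have hM : (0:ℝ) ≤ max M₀ 0 := le_max_right _ _
  have hbd : ∀ u v, |ext2 a b W u v| ≤ max M₀ 0 := by
    intro u v
    have h1 := hM₀ (clampTo a u, clampTo b v) ⟨clampTo_mem ha' u, clampTo_mem hb' v⟩
    calc |ext2 a b W u v| ≤ M₀ := by simpa [Real.norm_eq_abs, ext2] using h1
      _ ≤ max M₀ 0 := le_max_left _ _
  -- the data term
  set D : ℝ → ℝ → ℝ := fun u v => ξ (clampTo a u) + ζ (clampTo b v) - ζ 0 with hDdef
  have hDc : Continuous fun p : ℝ × ℝ => D p.1 p.2 := by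
    simp only [hDdef]
    refine Continuous.sub (Continuous.add ?_ ?_) continuous_const
    · exact hξ.continuousOn.comp_continuous
        ((continuous_clampTo a).comp continuous_fst) fun p => clampTo_mem ha' _
    · exact hζ.continuousOn.comp_continuous
        ((continuous_clampTo b).comp continuous_snd) fun p => clampTo_mem hb' _
  obtain ⟨⟨φ0, hφ0c, hφ0e⟩, huniq⟩ :=
    volterra a b (max M₀ 0) ha' hb' hM (ext2 a b W) D hWtc hDc hbd
  constructor
  · -- EXISTENCE
    set F : ℝ → ℝ → ℝ := fun s t => ext2 a b W s t * φ0 s t with hFdef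
    have hFc : Continuous fun p : ℝ × ℝ => F p.1 p.2 := by
      simp only [hFdef]; exact hWtc.mul hφ0c
    set Ψ : ℝ → ℝ → ℝ :=
      fun u v => D u v + ∫ s in (0:ℝ)..u, ∫ t in (0:ℝ)..v, F s t with hΨdef
    have hΨc : Continuous fun p : ℝ × ℝ => Ψ p.1 p.2 := by
      simp only [hΨdef]; exact hDc.add (contDouble hFc)
    have hΨeq : ∀ u ∈ Set.Icc (0:ℝ) a, ∀ v ∈ Set.Icc (0:ℝ) b, Ψ u v = φ0 u v := by
      intro u hu v hv
      simp only [hΨdef, hFdef]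
      exact (hφ0e u hu v hv).symm
    -- data derivatives
    set ξ' : ℝ → ℝ := derivWithin ξ (Set.Icc 0 a) with hξ'def
    set ζ' : ℝ → ℝ := derivWithin ζ (Set.Icc 0 b) with hζ'def
    have hξ'c : ContinuousOn ξ' (Set.Icc 0 a) := by
      rw [hξ'def]; exact hξ.continuousOn_derivWithin (uniqueDiffOn_Icc ha) le_rfl
    have hζ'c : ContinuousOn ζ' (Set.Icc 0 b) := by
      rw [hζ'def]; exact hζ.continuousOn_derivWithin (uniqueDiffOn_Icc hb) le_rfl
    have hξ'd : ∀ u ∈ Set.Icc (0:ℝ) a, HasDerivWithinAt ξ (ξ' u) (Set.Icc 0 a) u := by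
      intro u hu
      rw [hξ'def]
      exact ((hξ.differentiableOn one_ne_zero) u hu).hasDerivWithinAt
    have hζ'd : ∀ v ∈ Set.Icc (0:ℝ) b, HasDerivWithinAt ζ (ζ' v) (Set.Icc 0 b) v := by
      intro v hv
      rw [hζ'def]
      exact ((hζ.differentiableOn one_ne_zero) v hv).hasDerivWithinAt
    refine ⟨Ψ, hΨc.continuousOn,
      fun u v => ξ' u + ∫ t in (0:ℝ)..v, F u t,
      fun u v => ζ' v + ∫ s in (0:ℝ)..u, F s v,
      fun u v => F u v, ?_, ?_, ?_, ?_, ?_, ?_, ?_, ?_, ?_⟩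
    · -- continuity of φu
      exact (hξ'c.comp continuous_fst.continuousOn fun p hp => hp.1).add
        (contParam1 hFc).continuousOn
    · -- continuity of φv
      exact (hζ'c.comp continuous_snd.continuousOn fun p hp => hp.2).add
        (contParam2 hFc).continuousOn
    · -- continuity of φuv
      exact hFc.continuousOn
    · -- ∂_u Ψ
      intro v hv u hu
      have hin : Continuous fun s : ℝ => ∫ t in (0:ℝ)..v, F s t :=
        ((contParam1 hFc).comp (continuous_id.prodMk continuous_const)).congr fun s => rfl
      have hprim := (ftc hin 0 u).hasDerivWithinAt (s := Set.Icc (0:ℝ) a)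
      have h1 := ((hξ'd u hu).add_const (ζ (clampTo b v) - ζ 0)).add hprim
      refine h1.congr ?_ ?_
      · intro x hx
        show Ψ x v = _
        simp only [hΨdef, hDdef, Pi.add_apply]
        simp only [clampTo_eq hx]
        ring
      · show Ψ u v = _
        simp only [hΨdef, hDdef, Pi.add_apply]
        simp only [clampTo_eq hu]
        ring
    · -- ∂_v Ψ
      intro u hu v hv
      have hin2 : Continuous fun t : ℝ => ∫ s in (0:ℝ)..u, F s t :=
        ((contParam2 hFc).comp (continuous_const.prodMk continuous_id)).congr fun t => rfl
      have hprim2 := (ftc hin2 0 v).hasDerivWithinAt (s := Set.Icc (0:ℝ) b)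
      have h1 := (((hζ'd v hv).const_add (ξ (clampTo a u))).sub_const (ζ 0)).add hprim2
      refine h1.congr ?_ ?_
      · intro x hx
        show Ψ u x = _
        simp only [hΨdef, hDdef, Pi.add_apply]
        have hswap := intSwap (F := F) hFc hu.1 hx.1
        rw [hswap, clampTo_eq hx]
      · show Ψ u v = _
        simp only [hΨdef, hDdef, Pi.add_apply]
        have hswap := intSwap (F := F) hFc hu.1 hv.1
        rw [hswap, clampTo_eq hv]
    · -- ∂_u φv
      intro v hv u hu
      have hin3 : Continuous fun s : ℝ => F s v :=
        (hFc.comp (continuous_id.prodMk continuous_const)).congr fun s => rfl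
      exact ((ftc hin3 0 u).const_add (ζ' v)).hasDerivWithinAt
    · -- the equation
      intro u hu v hv
      show F u v = W u v * Ψ u v
      simp only [hFdef]; rw [hΨeq u hu v hv]
      simp only [ext2_eq W hu hv]
    · -- data on v = 0
      intro u hu
      show Ψ u 0 = ξ u
      simp only [hΨdef, hDdef]
      simp [intervalIntegral.integral_same, clampTo_eq hu,
        clampTo_eq (Set.left_mem_Icc.mpr hb')]
    · -- data on u = 0
      intro v hv
      show Ψ 0 v = ζ v
      simp only [hΨdef, hDdef]
      simp [intervalIntegral.integral_same, clampTo_eq hv,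
        clampTo_eq (Set.left_mem_Icc.mpr ha'), hcorner]
  · -- UNIQUENESS
    intro φ φ' h1 h2 u hu v hv
    have e1 := goursat_to_volterra a b ha hb W hW ξ ζ φ h1
    have e2 := goursat_to_volterra a b ha hb W hW ξ ζ φ' h2
    have := huniq (ext2 a b φ) (ext2 a b φ')
      (ext2_cont ha' hb' h1.1) (ext2_cont ha' hb' h2.1)
      (by intro u' hu' v' hv'; rw [hDdef]; exact e1 u' hu' v' hv')
      (by intro u' hu' v' hv'; rw [hDdef]; exact e2 u' hu' v' hv')
      u hu v hv
    rwa [ext2_eq φ hu hv, ext2_eq φ' hu hv] at this
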